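/- Let X be a topological manifold, Y a normal Hausdorff locally connected space, f : X → Y continuous, and Z ⊆ X a closed submanifold of codimension 1 such that f is diffuse on X − Z. Then f fails to be diffuse if and only if there exists a non-empty open subset W of Z such that the closure of f(W) in Y is negligible in Y. -/
import Mathlib


open Set Topology

/-- An open subset `U` is Z-dense if it meets every non-empty open connected set
in a non-empty connected set. -/
def IsZDense {X : Type*} [TopologicalSpace X] (U : Set X) : Prop :=
  IsOpen U ∧ ∀ C : Set X, IsOpen C → IsConnected C → IsConnected (U ∩ C)

/-- A subset is negligible if its complement is Z-dense. -/
def IsNegligible {X : Type*} [TopologicalSpace X] (I : Set X) : Prop :=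
  IsZDense Iᶜ

/-- A negligible subset element `(U, I)`: `U` open, `I ⊆ U`, the subspace `U`
locally connected, and `I` negligible in the subspace `U`. -/
def NegligibleElem {Y : Type*} [TopologicalSpace Y] (U I : Set Y) : Prop :=
  IsOpen U ∧ I ⊆ U ∧ LocallyConnectedSpace ↥U ∧
    IsNegligible ((Subtype.val ⁻¹' I : Set ↥U))

/-- A continuous function is diffuse if it pulls back negligible subset elements
to negligible subset elements. -/
def Diffuse {X Y : Type*} [TopologicalSpace X] [TopologicalSpace Y] (f : X → Y) : Prop :=
  Continuous f ∧ ∀ U I : Set Y, NegligibleElem U I → NegligibleElem (f ⁻¹' U) (f ⁻¹' I)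

section Transfer

variable {T : Type*} [TopologicalSpace T]

lemma isConnected_val_image_iff {V : Set T} {A : Set ↥V} :
    IsConnected (Subtype.val '' A : Set T) ↔ IsConnected A := by
  unfold IsConnected
  rw [Set.image_nonempty, IsInducing.subtypeVal.isPreconnected_image]

lemma negligible_val_preimage_iff {V : Set T} (hV : IsOpen V) (J : Set T) :
    IsNegligible ((Subtype.val ⁻¹' J : Set ↥V)) ↔
      (IsOpen (V \ J) ∧
        ∀ C : Set T, C ⊆ V → IsOpen C → IsConnected C → IsConnected (C \ J)) := by
  have hval : IsOpenMap (Subtype.val : ↥V → T) := hV.isOpenMap_subtype_val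
  constructor
  · rintro ⟨hopen, hconn⟩
    constructor
    · have h := hval _ hopen
      rwa [← Set.preimage_compl, Subtype.image_preimage_coe, ← Set.diff_eq] at h
    · intro C hCV hCo hCc
      have h1 : IsOpen ((Subtype.val : ↥V → T) ⁻¹' C) := hCo.preimage continuous_subtype_val
      have h2 : IsConnected ((Subtype.val : ↥V → T) ⁻¹' C) := by
        apply isConnected_val_image_iff.mp
        rwa [Subtype.image_preimage_coe, Set.inter_eq_self_of_subset_right hCV]
      have h3 := hconn _ h1 h2
      have h4 := isConnected_val_image_iff.mpr h3
      rwa [Set.image_inter Subtype.val_injective, ← Set.preimage_compl,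
        Subtype.image_preimage_coe, Subtype.image_preimage_coe,
        show (V ∩ Jᶜ) ∩ (V ∩ C) = C \ J by
          ext x
          simp only [Set.mem_inter_iff, Set.mem_compl_iff, Set.mem_diff]
          exact ⟨fun h => ⟨h.2.2, h.1.2⟩, fun h => ⟨⟨hCV h.1, h.2⟩, hCV h.1, h.1⟩⟩] at h4
  · rintro ⟨hopen, hconn⟩
    constructor
    · have heq : (Subtype.val ⁻¹' J : Set ↥V)ᶜ = Subtype.val ⁻¹' (V \ J) := by
        ext x
        simp only [Set.mem_compl_iff, Set.mem_preimage, Set.mem_diff]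
        exact ⟨fun h => ⟨x.2, h⟩, fun h => h.2⟩
      rw [heq]
      exact hopen.preimage continuous_subtype_val
    · intro C' hC'o hC'c
      have hCV : (Subtype.val '' C' : Set T) ⊆ V := by
        rintro _ ⟨x, -, rfl⟩; exact x.2
      have h := hconn _ hCV (hval _ hC'o) (isConnected_val_image_iff.mpr hC'c)
      apply isConnected_val_image_iff.mp
      rw [Set.image_inter Subtype.val_injective, ← Set.preimage_compl,
        Subtype.image_preimage_coe,
        show (V ∩ Jᶜ) ∩ (Subtype.val '' C') = (Subtype.val '' C') \ J by
          ext x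
          simp only [Set.mem_inter_iff, Set.mem_compl_iff, Set.mem_diff]
          exact ⟨fun h => ⟨h.2, h.1.2⟩, fun h => ⟨⟨hCV h.1, h.2⟩, h.1⟩⟩]
      exact h

lemma exists_conn_nbhd [LocallyConnectedSpace T] {O : Set T} (hO : IsOpen O) {x : T}
    (hx : x ∈ O) : ∃ N : Set T, N ⊆ O ∧ IsOpen N ∧ x ∈ N ∧ IsConnected N :=
  locallyConnectedSpace_iff_subsets_isOpen_isConnected.mp inferInstance x O (hO.mem_nhds hx)

lemma closed_subset_negligible [LocallyConnectedSpace T] {I K : Set T}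
    (hI : IsNegligible I) (hKc : IsOpen Kᶜ) (hKI : K ⊆ I) : IsNegligible K := by
  refine ⟨hKc, fun C hCo hCc => ?_⟩
  have h1 : IsConnected (Iᶜ ∩ C) := hI.2 C hCo hCc
  have hsub : Iᶜ ∩ C ⊆ Kᶜ ∩ C :=
    Set.inter_subset_inter_left _ (Set.compl_subset_compl.mpr hKI)
  have hdense : Kᶜ ∩ C ⊆ closure (Iᶜ ∩ C) := by
    intro x hx
    rw [mem_closure_iff]
    intro O hOo hxO
    obtain ⟨N, hNsub, hNo, hxN, hNc⟩ := exists_conn_nbhd (hOo.inter hCo) ⟨hxO, hx.2⟩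
    obtain ⟨y, hy⟩ := (hI.2 N hNo hNc).nonempty
    exact ⟨y, (hNsub hy.2).1, hy.1, (hNsub hy.2).2⟩
  exact ⟨h1.nonempty.mono hsub, h1.isPreconnected.subset_closure hsub hdense⟩

lemma patchwork {C K : Set T} (hCo : IsOpen C) (hCc : IsConnected C)
    (hloc : ∀ x ∈ C, ∃ N, IsOpen N ∧ x ∈ N ∧ N ⊆ C ∧ IsConnected (N \ K))
    (hint : ∀ O : Set T, IsOpen O → O ⊆ C → O.Nonempty → (O \ K).Nonempty) :
    IsConnected (C \ K) := by
  refine ⟨hint C hCo subset_rfl hCc.nonempty, ?_⟩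
  intro u v hu hv hcover ⟨a, ha⟩ ⟨b, hb⟩
  by_contra hempty
  rw [Set.not_nonempty_iff_eq_empty] at hempty
  -- family of good open sets
  set Fu : Set (Set T) := {S | IsOpen S ∧ S ⊆ C ∧ S \ K ⊆ u} with hFu
  set Fv : Set (Set T) := {S | IsOpen S ∧ S ⊆ C ∧ S \ K ⊆ v} with hFv
  have hclass : ∀ x ∈ C, ∃ N, (N ∈ Fu ∨ N ∈ Fv) ∧ x ∈ N := by
    intro x hx
    obtain ⟨N, hNo, hxN, hNC, hNc⟩ := hloc x hx
    have hNuv : N \ K ⊆ u ∪ v := fun y hy =>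
      hcover ⟨hNC hy.1, hy.2⟩
    have : N \ K ⊆ u ∨ N \ K ⊆ v := by
      rcases Set.eq_empty_or_nonempty ((N \ K) ∩ u) with h0 | h0
      · right
        intro y hy
        rcases hNuv hy with h' | h'
        · exfalso
          rw [Set.eq_empty_iff_forall_notMem] at h0
          exact h0 y ⟨hy, h'⟩
        · exact h'
      · rcases Set.eq_empty_or_nonempty ((N \ K) ∩ v) with h1 | h1
        · left
          intro y hy
          rcases hNuv hy with h' | h'
          · exact h'
          · exfalso
            rw [Set.eq_empty_iff_forall_notMem] at h1
            exact h1 y ⟨hy, h'⟩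
        · exfalso
          obtain ⟨w, hw⟩ := hNc.isPreconnected u v hu hv hNuv h0 h1
          have hwC : w ∈ C \ K := ⟨hNC hw.1.1, hw.1.2⟩
          have : w ∈ C \ K ∩ (u ∩ v) := ⟨hwC, hw.2⟩
          rw [hempty] at this
          exact this
    rcases this with h | h
    · exact ⟨N, Or.inl ⟨hNo, hNC, h⟩, hxN⟩
    · exact ⟨N, Or.inr ⟨hNo, hNC, h⟩, hxN⟩
  set u' : Set T := ⋃₀ Fu with hu'
  set v' : Set T := ⋃₀ Fv with hv'
  have hu'o : IsOpen u' := isOpen_sUnion fun S hS => hS.1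
  have hv'o : IsOpen v' := isOpen_sUnion fun S hS => hS.1
  have hcov : C ⊆ u' ∪ v' := by
    intro x hx
    obtain ⟨N, hN, hxN⟩ := hclass x hx
    rcases hN with h | h
    · exact Or.inl ⟨N, h, hxN⟩
    · exact Or.inr ⟨N, h, hxN⟩
  have hdisj : C ∩ (u' ∩ v') = ∅ := by
    rw [Set.eq_empty_iff_forall_notMem]
    rintro y ⟨hyC, ⟨S1, hS1, hyS1⟩, ⟨S2, hS2, hyS2⟩⟩
    have hne : (S1 ∩ S2).Nonempty := ⟨y, hyS1, hyS2⟩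
    obtain ⟨w, hw⟩ := hint (S1 ∩ S2) (hS1.1.inter hS2.1)
      (fun t ht => hS1.2.1 ht.1) hne
    have hwu : w ∈ u := hS1.2.2 ⟨hw.1.1, hw.2⟩
    have hwv : w ∈ v := hS2.2.2 ⟨hw.1.2, hw.2⟩
    have : w ∈ C \ K ∩ (u ∩ v) := ⟨⟨hS1.2.1 hw.1.1, hw.2⟩, hwu, hwv⟩
    rw [hempty] at this
    exact this
  have hau' : a ∈ u' := by
    obtain ⟨N, hN, haN⟩ := hclass a ha.1.1
    rcases hN with h | h
    · exact ⟨N, h, haN⟩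
    · exfalso
      have : a ∈ C \ K ∩ (u ∩ v) := ⟨ha.1, ha.2, h.2.2 ⟨haN, ha.1.2⟩⟩
      rw [hempty] at this
      exact this
  have hbv' : b ∈ v' := by
    obtain ⟨N, hN, hbN⟩ := hclass b hb.1.1
    rcases hN with h | h
    · exfalso
      have : b ∈ C \ K ∩ (u ∩ v) := ⟨hb.1, h.2.2 ⟨hbN, hb.1.2⟩, hb.2⟩
      rw [hempty] at this
      exact this
    · exact ⟨N, h, hbN⟩
  obtain ⟨w, hw⟩ := hCc.isPreconnected u' v' hu'o hv'o hcov ⟨a, ha.1.1, hau'⟩ ⟨b, hb.1.1, hbv'⟩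
  have : w ∈ C ∩ (u' ∩ v') := ⟨hw.1, hw.2⟩
  rw [hdisj] at this
  exact this

lemma negligible_of_negligible_open [LocallyConnectedSpace T] {V K : Set T}
    (hV : IsOpen V) (hKV : K ⊆ V) (hKc : IsClosed K)
    (h : ∀ C : Set T, C ⊆ V → IsOpen C → IsConnected C → IsConnected (C \ K)) :
    IsNegligible K := by
  refine ⟨hKc.isOpen_compl, fun C hCo hCc => ?_⟩
  have key : IsConnected (C \ K) := by
    apply patchwork hCo hCc
    · intro x hx
      by_cases hxK : x ∈ K
      · obtain ⟨N, hNsub, hNo, hxN, hNc⟩ := exists_conn_nbhd (hCo.inter hV) ⟨hx, hKV hxK⟩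
        exact ⟨N, hNo, hxN, fun y hy => (hNsub hy).1,
          h N (fun y hy => (hNsub hy).2) hNo hNc⟩
      · obtain ⟨N, hNsub, hNo, hxN, hNc⟩ :=
          exists_conn_nbhd (hCo.inter hKc.isOpen_compl) ⟨hx, hxK⟩
        refine ⟨N, hNo, hxN, fun y hy => (hNsub hy).1, ?_⟩
        have hNK : N \ K = N := by
          ext y
          simp only [Set.mem_diff, and_iff_left_iff_imp]
          intro hy
          exact (hNsub hy).2
        rw [hNK]
        exact hNc
    · intro O hOo hOC hOne
      obtain ⟨x, hxO⟩ := hOne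
      by_cases hxK : x ∈ K
      · obtain ⟨N, hNsub, hNo, hxN, hNc⟩ := exists_conn_nbhd (hOo.inter hV) ⟨hxO, hKV hxK⟩
        have hne := (h N (fun y hy => (hNsub hy).2) hNo hNc).nonempty
        exact hne.mono (Set.diff_subset_diff_left fun y hy => (hNsub hy).1)
      · exact ⟨x, hxO, hxK⟩
  rwa [show Kᶜ ∩ C = C \ K by rw [Set.diff_eq, Set.inter_comm]]

end Transfer
section Chart

open Metric

variable {X : Type*} [TopologicalSpace X] {n : ℕ}

local notation "E" => EuclideanSpace ℝ (Fin (n + 1))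

lemma coord_linear : IsLinearMap ℝ (fun y : E => y 0) :=
  ⟨fun _ _ => rfl, fun _ _ => rfl⟩

lemma coord_continuous : Continuous (fun y : E => y 0) :=
  (EuclideanSpace.proj (0 : Fin (n + 1))).continuous

lemma chart_ball {Z : Set X} {U₀ : Set X} (hU₀ : IsOpen U₀)
    (e : ↥U₀ ≃ₜ EuclideanSpace ℝ (Fin (n + 1)))
    (he : e '' (Subtype.val ⁻¹' Z) = {y : EuclideanSpace ℝ (Fin (n + 1)) | y 0 = 0})
    {z : X} (hz : z ∈ Z) (hzU : z ∈ U₀) {O : Set X} (hO : IsOpen O) (hzO : z ∈ O) :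
    ∃ V Hp Hn : Set X, IsOpen V ∧ IsConnected V ∧ z ∈ V ∧ V ⊆ O ∧
      IsOpen Hp ∧ IsOpen Hn ∧ IsConnected Hp ∧ IsConnected Hn ∧
      Hp ⊆ V \ Z ∧ Hn ⊆ V \ Z ∧ V \ Z ⊆ Hp ∪ Hn ∧ Disjoint Hp Hn ∧
      (∀ z' ∈ V ∩ Z, ∀ N : Set X, IsOpen N → z' ∈ N →
        ∃ L : Set X, IsPreconnected L ∧ z' ∈ L ∧ L ⊆ V ∩ N ∧
          (L ∩ Hp).Nonempty ∧ (L ∩ Hn).Nonempty) := by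
  classical
  have hval : IsOpenMap (Subtype.val : ↥U₀ → X) := hU₀.isOpenMap_subtype_val
  set p : E := e ⟨z, hzU⟩ with hp
  have hp0 : p 0 = 0 := by
    have : p ∈ e '' (Subtype.val ⁻¹' Z) := ⟨⟨z, hzU⟩, hz, rfl⟩
    rw [he] at this
    exact this
  -- find radius
  have hO' : IsOpen (e '' (Subtype.val ⁻¹' O)) :=
    (Homeomorph.isOpenMap e) _ ((hO.preimage continuous_subtype_val))
  have hpO' : p ∈ e '' (Subtype.val ⁻¹' O) := ⟨⟨z, hzU⟩, hzO, rfl⟩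
  obtain ⟨r, hr, hball⟩ := Metric.isOpen_iff.mp hO' p hpO'
  -- basic membership lemma
  have hmem : ∀ S : Set E, ∀ q : E,
      (Subtype.val (e.symm q) ∈ Subtype.val '' (e ⁻¹' S) ↔ q ∈ S) := by
    intro S q
    constructor
    · rintro ⟨w, hw, hww⟩
      have : w = e.symm q := Subtype.val_injective hww
      rw [this] at hw
      simpa using hw
    · intro hq
      exact ⟨e.symm q, by simpa using hq, rfl⟩
  have hmem' : ∀ S : Set E, ∀ x ∈ Subtype.val '' (e ⁻¹' S),
      ∃ q ∈ S, x = Subtype.val (e.symm q) := by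
    rintro S x ⟨w, hw, rfl⟩
    exact ⟨e w, hw, by simp⟩
  set sing : EuclideanSpace ℝ (Fin (n+1)) := EuclideanSpace.single (0 : Fin (n+1)) (1 : ℝ)
    with hsing
  have hsing0 : sing 0 = 1 := by simp [hsing, EuclideanSpace.single_apply]
  have hsingn : ‖sing‖ = 1 := by rw [hsing, EuclideanSpace.norm_single, norm_one]
  set V : Set X := Subtype.val '' (e ⁻¹' ball p r) with hV
  set Hp : Set X := Subtype.val '' (e ⁻¹' (ball p r ∩ {y : E | 0 < y 0})) with hHp
  set Hn : Set X := Subtype.val '' (e ⁻¹' (ball p r ∩ {y : E | y 0 < 0})) with hHn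
  have hconn : ∀ S : Set E, Convex ℝ S → S.Nonempty →
      IsConnected (Subtype.val '' (e ⁻¹' S) : Set X) := by
    intro S hS hSne
    apply isConnected_val_image_iff.mpr
    rw [show (e ⁻¹' S) = e.symm '' S by
      ext w; simp [Homeomorph.image_symm, Set.mem_preimage]]
    exact (e.symm.isConnected_image (s := S)).mpr ⟨hSne, hS.isPreconnected⟩
  have hZiff : ∀ w : ↥U₀, (Subtype.val w ∈ Z ↔ (e w) 0 = 0) := by
    intro w
    constructor
    · intro hw
      have : e w ∈ e '' (Subtype.val ⁻¹' Z) := ⟨w, hw, rfl⟩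
      rw [he] at this
      exact this
    · intro hw
      have : e w ∈ e '' (Subtype.val ⁻¹' Z) := by rw [he]; exact hw
      rcases this with ⟨w', hw', hww⟩
      have : w' = w := e.injective hww
      rw [← this]
      exact hw'
  refine ⟨V, Hp, Hn, hval _ ((Metric.isOpen_ball).preimage e.continuous), ?_, ?_, ?_,
    hval _ (((Metric.isOpen_ball).inter (isOpen_lt continuous_const coord_continuous)).preimage
      e.continuous),
    hval _ (((Metric.isOpen_ball).inter (isOpen_lt coord_continuous continuous_const)).preimage
      e.continuous),
    ?_, ?_, ?_, ?_, ?_, ?_, ?_⟩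
  · exact hconn _ (convex_ball p r) ⟨p, mem_ball_self hr⟩
  · exact ⟨⟨z, hzU⟩, Set.mem_preimage.mpr (mem_ball_self hr), rfl⟩
  · rintro x ⟨w, hw, rfl⟩
    have : e w ∈ e '' (Subtype.val ⁻¹' O) := hball hw
    rcases this with ⟨w', hw', hww⟩
    rwa [← e.injective hww]
  · -- Hp connected
    apply hconn _ ((convex_ball p r).inter (convex_halfSpace_gt coord_linear 0))
    refine ⟨p + (r / 2) • sing, ?_, ?_⟩
    · rw [mem_ball_iff_norm]
      simp only [add_sub_cancel_left]
      rw [norm_smul, hsingn, mul_one, Real.norm_eq_abs, abs_of_pos (half_pos hr)]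
      exact half_lt_self hr
    · show 0 < (p + (r / 2) • sing) 0
      rw [PiLp.add_apply, PiLp.smul_apply, hsing0, hp0]
      simp [half_pos hr]
  · -- Hn connected
    apply hconn _ ((convex_ball p r).inter (convex_halfSpace_lt coord_linear 0))
    refine ⟨p - (r / 2) • sing, ?_, ?_⟩
    · rw [mem_ball_iff_norm]
      simp only [sub_sub_cancel_left, norm_neg]
      rw [norm_smul, hsingn, mul_one, Real.norm_eq_abs, abs_of_pos (half_pos hr)]
      exact half_lt_self hr
    · show (p - (r / 2) • sing) 0 < 0
      rw [PiLp.sub_apply, PiLp.smul_apply, hsing0, hp0]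
      simp [half_pos hr]
  · -- Hp ⊆ V \ Z
    rintro x ⟨w, hw, rfl⟩
    refine ⟨⟨w, hw.1, rfl⟩, ?_⟩
    intro hxZ
    have := (hZiff w).mp hxZ
    have h2 : (0:ℝ) < (e w) 0 := hw.2
    rw [this] at h2
    exact lt_irrefl 0 h2
  · rintro x ⟨w, hw, rfl⟩
    refine ⟨⟨w, hw.1, rfl⟩, ?_⟩
    intro hxZ
    have := (hZiff w).mp hxZ
    have h2 : (e w) 0 < 0 := hw.2
    rw [this] at h2
    exact lt_irrefl 0 h2
  · -- V \ Z ⊆ Hp ∪ Hn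
    rintro x ⟨⟨w, hw, rfl⟩, hxZ⟩
    have h0 : (e w) 0 ≠ 0 := fun h => hxZ ((hZiff w).mpr h)
    rcases h0.lt_or_gt with h | h
    · exact Or.inr ⟨w, ⟨hw, h⟩, rfl⟩
    · exact Or.inl ⟨w, ⟨hw, h⟩, rfl⟩
  · -- disjoint
    rw [Set.disjoint_left]
    rintro x ⟨w, hw, rfl⟩ ⟨w', hw', hww⟩
    have : w' = w := Subtype.val_injective hww
    rw [this] at hw'
    exact lt_irrefl (0:ℝ) (hw.2.trans hw'.2)
  · -- connector
    rintro z' ⟨hz'V, hz'Z⟩ N hN hz'N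
    rcases hmem' _ _ hz'V with ⟨q, hqB, rfl⟩
    have hq0 : q 0 = 0 := by
      have := (hZiff (e.symm q)).mp hz'Z
      simpa using this
    set φ : ℝ → X := fun t => Subtype.val (e.symm (q + t • sing)) with hφ
    have hφc : Continuous φ :=
      continuous_subtype_val.comp (e.symm.continuous.comp
        (continuous_const.add ((continuous_id.smul continuous_const))))
    have hφ0 : φ 0 = Subtype.val (e.symm q) := by simp [hφ]
    have hG : IsOpen (φ ⁻¹' (V ∩ N)) :=
      ((hval _ ((Metric.isOpen_ball).preimage e.continuous)).inter hN).preimage hφc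
    have h0G : (0:ℝ) ∈ φ ⁻¹' (V ∩ N) := by
      rw [Set.mem_preimage, hφ0]
      exact ⟨(hmem _ q).mpr hqB, hz'N⟩
    obtain ⟨δ, hδ, hδG⟩ := Metric.isOpen_iff.mp hG 0 h0G
    set t₀ : ℝ := δ / 2 with ht₀
    have ht₀pos : 0 < t₀ := half_pos hδ
    have hIcc : Set.Icc (-t₀) t₀ ⊆ φ ⁻¹' (V ∩ N) := by
      intro t ht
      apply hδG
      rw [Real.ball_eq_Ioo]
      constructor
      · linarith [ht.1]
      · linarith [ht.2]
    refine ⟨φ '' Set.Icc (-t₀) t₀, isPreconnected_Icc.image φ hφc.continuousOn,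
      ⟨0, ⟨by linarith, by linarith⟩, hφ0⟩, ?_, ?_, ?_⟩
    · rintro x ⟨t, ht, rfl⟩
      exact hIcc ht
    · -- meets Hp
      refine ⟨φ t₀, ⟨t₀, ⟨by linarith, le_refl _⟩, rfl⟩, ?_⟩
      have hmemV : φ t₀ ∈ V := (hIcc ⟨by linarith, le_refl _⟩).1
      have hqb : q + t₀ • sing ∈ ball p r := (hmem _ _).mp hmemV
      apply (hmem (ball p r ∩ {y : E | 0 < y 0}) _).mpr
      refine ⟨hqb, ?_⟩
      show 0 < (q + t₀ • sing) 0
      rw [PiLp.add_apply, PiLp.smul_apply, hsing0, hq0]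
      simpa using ht₀pos
    · -- meets Hn
      refine ⟨φ (-t₀), ⟨-t₀, ⟨le_refl _, by linarith⟩, rfl⟩, ?_⟩
      have hmemV : φ (-t₀) ∈ V := (hIcc ⟨le_refl _, by linarith⟩).1
      have hqb : q + (-t₀) • sing ∈ ball p r := (hmem _ _).mp hmemV
      apply (hmem (ball p r ∩ {y : E | y 0 < 0}) _).mpr
      refine ⟨hqb, ?_⟩
      show (q + (-t₀) • sing) 0 < 0
      rw [PiLp.add_apply, PiLp.smul_apply, hsing0, hq0]
      simpa using ht₀pos

end Chart
section Main

lemma diffuse_restrict_conseq {X Y : Type*} [TopologicalSpace X] [TopologicalSpace Y]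
    {f : X → Y} {Z : Set X}
    (hres : Diffuse (fun x : ↥(Zᶜ) => f ↑x)) {U I : Set Y} (hUI : NegligibleElem U I)
    {H : Set X} (hHo : IsOpen H) (hHc : IsConnected H) (hHZ : H ⊆ Zᶜ) (hHU : H ⊆ f ⁻¹' U) :
    IsConnected (H \ f ⁻¹' I) := by
  obtain ⟨hgU, -, -, hneg⟩ := hres.2 U I hUI
  rw [negligible_val_preimage_iff hgU] at hneg
  obtain ⟨-, hconn⟩ := hneg
  have h1 : (Subtype.val ⁻¹' H : Set ↥(Zᶜ)) ⊆ (fun x : ↥(Zᶜ) => f ↑x) ⁻¹' U :=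
    fun x hx => hHU hx
  have h2 : IsOpen (Subtype.val ⁻¹' H : Set ↥(Zᶜ)) := hHo.preimage continuous_subtype_val
  have h3 : IsConnected (Subtype.val ⁻¹' H : Set ↥(Zᶜ)) := by
    apply isConnected_val_image_iff.mp
    rwa [Subtype.image_preimage_coe, Set.inter_eq_self_of_subset_right hHZ]
  have h4 := hconn _ h1 h2 h3
  have heq : (Subtype.val ⁻¹' H : Set ↥(Zᶜ)) \ ((fun x : ↥(Zᶜ) => f ↑x) ⁻¹' I)
      = Subtype.val ⁻¹' (H \ f ⁻¹' I) := rfl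
  rw [heq] at h4
  have h5 := isConnected_val_image_iff.mpr h4
  rwa [Subtype.image_preimage_coe, Set.inter_eq_self_of_subset_right
    (fun x hx => hHZ hx.1)] at h5

/-- Let `X` be a topological manifold (locally homeomorphic to `ℝ^{n+1}`), `Y` a
normal Hausdorff locally connected space, `f : X → Y` continuous, and `Z ⊆ X` a
closed codimension-1 submanifold such that `f` is diffuse on `X − Z`.  Then `f`
fails to be diffuse iff there is a non-empty open subset `W` of `Z` whose image
under `f` has negligible closure in `Y`. -/
theorem not_diffuse_iff_exists_negligible_closure
    {X Y : Type*} [TopologicalSpace X] [T2Space X] [LocallyConnectedSpace X]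
    [TopologicalSpace Y] [T2Space Y] [NormalSpace Y] [LocallyConnectedSpace Y]
    (n : ℕ)
    (hman : ∀ x : X, ∃ U : Set X, IsOpen U ∧ x ∈ U ∧
      Nonempty (↥U ≃ₜ EuclideanSpace ℝ (Fin (n + 1))))
    (f : X → Y) (hf : Continuous f)
    {Z : Set X} (hZc : IsClosed Z)
    (hZman : ∀ x ∈ Z, ∃ (U : Set X), IsOpen U ∧ x ∈ U ∧
      ∃ e : ↥U ≃ₜ EuclideanSpace ℝ (Fin (n + 1)),
        e '' (Subtype.val ⁻¹' Z) = {y : EuclideanSpace ℝ (Fin (n + 1)) | y 0 = 0})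
    (hres : Diffuse (fun x : ↥(Zᶜ) => f ↑x)) :
    ¬ Diffuse f ↔
      ∃ W : Set X, W ⊆ Z ∧ W.Nonempty ∧ (∃ O : Set X, IsOpen O ∧ W = O ∩ Z) ∧
        IsNegligible (closure (f '' W)) := by
  classical
  constructor
  · intro hnd
    by_contra hnW
    push_neg at hnW
    apply hnd
    refine ⟨hf, fun U I hUI => ?_⟩
    obtain ⟨hUo, hIU, hUlc, hIneg⟩ := hUI
    have hIrel := hIneg
    rw [negligible_val_preimage_iff hUo] at hIrel
    obtain ⟨hUIo, hUIconn⟩ := hIrel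
    have hIclrel : ∀ x, x ∈ U → x ∈ closure I → x ∈ I := by
      intro x hxU hxcl
      by_contra hxI
      obtain ⟨y, hy⟩ := mem_closure_iff_nhds.mp hxcl _ (hUIo.mem_nhds ⟨hxU, hxI⟩)
      exact hy.1.2 hy.2
    have hDint : ∀ V' : Set X, IsOpen V' → (V' ∩ Z).Nonempty →
        ∃ z', z' ∈ V' ∩ Z ∧ z' ∉ f ⁻¹' I := by
      rintro V' hV'o ⟨z, hzV', hzZ⟩
      by_contra hall
      push_neg at hall
      have hfz : f z ∈ I := hall z ⟨hzV', hzZ⟩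
      obtain ⟨t, htn, htc, htU⟩ := exists_mem_nhds_isClosed_subset (hUo.mem_nhds (hIU hfz))
      set O := V' ∩ f ⁻¹' (interior t) with hO
      have hOo : IsOpen O := hV'o.inter (isOpen_interior.preimage hf)
      have hzO : z ∈ O := ⟨hzV', mem_interior_iff_mem_nhds.mpr htn⟩
      set K := closure (f '' (O ∩ Z)) with hK
      have hKt : K ⊆ t := by
        have h1 : f '' (O ∩ Z) ⊆ interior t := by
          rintro y ⟨w, hw, rfl⟩
          exact hw.1.2
        calc K ⊆ closure (interior t) := closure_mono h1
        _ ⊆ closure t := closure_mono interior_subset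
        _ = t := htc.closure_eq
      have hKU : K ⊆ U := fun x hx => htU (hKt hx)
      have hKI : K ⊆ I := by
        intro x hx
        apply hIclrel x (hKU hx)
        have h1 : f '' (O ∩ Z) ⊆ I := by
          rintro y ⟨w, hw, rfl⟩
          exact hall w ⟨hw.1.1, hw.2⟩
        exact closure_mono h1 hx
      haveI := hUlc
      have hKneg₁ : IsNegligible (Subtype.val ⁻¹' K : Set ↥U) :=
        closed_subset_negligible hIneg
          (isClosed_closure.preimage continuous_subtype_val).isOpen_compl
          (fun x hx => hKI hx)
      rw [negligible_val_preimage_iff hUo] at hKneg₁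
      have hKneg : IsNegligible K :=
        negligible_of_negligible_open hUo hKU isClosed_closure hKneg₁.2
      exact hnW (O ∩ Z) Set.inter_subset_right ⟨z, hzO, hzZ⟩ ⟨O, hOo, rfl⟩ hKneg
    have hfUo : IsOpen (f ⁻¹' U) := hUo.preimage hf
    refine ⟨hfUo, fun x hx => hIU hx, hfUo.locallyConnectedSpace, ?_⟩
    rw [negligible_val_preimage_iff hfUo]
    constructor
    · have h1 : f ⁻¹' U \ f ⁻¹' I = f ⁻¹' (U \ I) := rfl
      rw [h1]
      exact hUIo.preimage hf
    · intro C hCU hCo hCc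
      apply patchwork hCo hCc
      · intro x hx
        by_cases hxZ : x ∈ Z
        · obtain ⟨U₀, hU₀o, hxU₀, e, he⟩ := hZman x hxZ
          obtain ⟨V, Hp, Hn, hVo, hVc, hxV, hVC, hHpo, hHno, hHpc, hHnc, hHpV, hHnV,
            hVZ, hdisj, hconn⟩ := chart_ball hU₀o e he hxZ hxU₀ hCo hx
          refine ⟨V, hVo, hxV, hVC, ?_⟩
          obtain ⟨z₀, hz₀, hz₀I⟩ := hDint V hVo ⟨x, hxV, hxZ⟩
          have hHpI : IsConnected (Hp \ f ⁻¹' I) :=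
            diffuse_restrict_conseq hres ⟨hUo, hIU, hUlc, hIneg⟩ hHpo hHpc
              (fun y hy => (hHpV hy).2) (fun y hy => hCU (hVC (hHpV hy).1))
          have hHnI : IsConnected (Hn \ f ⁻¹' I) :=
            diffuse_restrict_conseq hres ⟨hUo, hIU, hUlc, hIneg⟩ hHno hHnc
              (fun y hy => (hHnV hy).2) (fun y hy => hCU (hVC (hHnV hy).1))
          obtain ⟨x₀, hx₀⟩ := hHpI.nonempty
          have hNI : IsOpen (f ⁻¹' (U \ I)) := hUIo.preimage hf
          have hL : ∀ z' ∈ V ∩ Z, z' ∉ f ⁻¹' I → ∃ L, IsPreconnected L ∧ z' ∈ L ∧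
              L ⊆ V \ f ⁻¹' I ∧ (L ∩ Hp).Nonempty ∧ (L ∩ Hn).Nonempty := by
            intro z' hz' hz'I
            have hz'N : z' ∈ f ⁻¹' (U \ I) := ⟨hCU (hVC hz'.1), hz'I⟩
            obtain ⟨L, hLc, hzL, hLsub, hLp, hLn⟩ := hconn z' hz' _ hNI hz'N
            exact ⟨L, hLc, hzL,
              fun y hy => ⟨(hLsub hy).1, (hLsub hy).2.2⟩, hLp, hLn⟩
          obtain ⟨L₀, hL₀c, hz₀L, hL₀sub, hL₀p, hL₀n⟩ := hL z₀ hz₀ hz₀I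
          have hPL : ((Hp \ f ⁻¹' I) ∩ L₀).Nonempty := by
            obtain ⟨y, hy⟩ := hL₀p
            exact ⟨y, ⟨hy.2, (hL₀sub hy.1).2⟩, hy.1⟩
          have hBc : IsPreconnected ((Hp \ f ⁻¹' I) ∪ L₀ ∪ (Hn \ f ⁻¹' I)) := by
            apply IsPreconnected.union'
            · obtain ⟨y, hy⟩ := hL₀n
              exact ⟨y, Or.inr hy.1, hy.2, (hL₀sub hy.1).2⟩
            · exact hHpI.isPreconnected.union' hPL hL₀c
            · exact hHnI.isPreconnected
          have hHpVI : Hp \ f ⁻¹' I ⊆ V \ f ⁻¹' I :=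
            fun y hy => ⟨(hHpV hy.1).1, hy.2⟩
          have hHnVI : Hn \ f ⁻¹' I ⊆ V \ f ⁻¹' I :=
            fun y hy => ⟨(hHnV hy.1).1, hy.2⟩
          refine ⟨⟨x₀, hHpVI hx₀⟩, isPreconnected_of_forall x₀ ?_⟩
          intro y hy
          by_cases hyZ : y ∈ Z
          · obtain ⟨L, hLc, hyL, hLsub, hLp, hLn⟩ := hL y ⟨hy.1, hyZ⟩ hy.2
            refine ⟨(Hp \ f ⁻¹' I) ∪ L, ?_, Or.inl hx₀, Or.inr hyL, ?_⟩
            · exact Set.union_subset hHpVI hLsub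
            · apply hHpI.isPreconnected.union'
              · obtain ⟨w, hw⟩ := hLp
                exact ⟨w, ⟨hw.2, (hLsub hw.1).2⟩, hw.1⟩
              · exact hLc
          · rcases hVZ ⟨hy.1, hyZ⟩ with hyp | hyn
            · exact ⟨Hp \ f ⁻¹' I, hHpVI, hx₀, ⟨hyp, hy.2⟩, hHpI.isPreconnected⟩
            · refine ⟨(Hp \ f ⁻¹' I) ∪ L₀ ∪ (Hn \ f ⁻¹' I), ?_,
                Or.inl (Or.inl hx₀), Or.inr ⟨hyn, hy.2⟩, hBc⟩
              exact Set.union_subset (Set.union_subset hHpVI hL₀sub) hHnVI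
        · obtain ⟨N, hNsub, hNo, hxN, hNc⟩ :=
            exists_conn_nbhd (hCo.inter hZc.isOpen_compl) ⟨hx, hxZ⟩
          exact ⟨N, hNo, hxN, fun y hy => (hNsub hy).1,
            diffuse_restrict_conseq hres ⟨hUo, hIU, hUlc, hIneg⟩ hNo hNc
              (fun y hy => (hNsub hy).2) (fun y hy => hCU (hNsub hy).1)⟩
      · intro O hOo hOC hOne
        obtain ⟨x, hxO⟩ := hOne
        rcases Set.eq_empty_or_nonempty (O ∩ Z) with hOZ | hOZ
        · have hOZc : O ⊆ Zᶜ := fun y hy hyZ =>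
            (Set.eq_empty_iff_forall_notMem.mp hOZ) y ⟨hy, hyZ⟩
          obtain ⟨N, hNsub, hNo, hxN, hNc⟩ := exists_conn_nbhd hOo hxO
          have hne := (diffuse_restrict_conseq hres ⟨hUo, hIU, hUlc, hIneg⟩ hNo hNc
            (fun y hy => hOZc (hNsub hy)) (fun y hy => hCU (hOC (hNsub hy)))).nonempty
          exact hne.mono (Set.diff_subset_diff_left hNsub)
        · obtain ⟨z', hz', hz'I⟩ := hDint O hOo hOZ
          exact ⟨z', hz'.1, hz'I⟩
  · rintro ⟨W, hWZ, ⟨z, hzW⟩, ⟨O, hOo, rfl⟩, hKneg⟩ hdif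
    have hzZ : z ∈ Z := hzW.2
    have hzO : z ∈ O := hzW.1
    set I := closure (f '' (O ∩ Z)) with hI
    haveI : LocallyConnectedSpace ↥(Set.univ : Set Y) := isOpen_univ.locallyConnectedSpace
    have hneU : NegligibleElem Set.univ I := by
      refine ⟨isOpen_univ, Set.subset_univ _, inferInstance, ?_⟩
      rw [negligible_val_preimage_iff isOpen_univ]
      refine ⟨?_, fun C _ hCo hCc => ?_⟩
      · rw [show (Set.univ : Set Y) \ I = Iᶜ by
          rw [Set.diff_eq, Set.univ_inter]]
        exact hKneg.1
      · have h := hKneg.2 C hCo hCc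
        rwa [Set.inter_comm, ← Set.diff_eq] at h
    have h2 := hdif.2 Set.univ I hneU
    rw [Set.preimage_univ] at h2
    obtain ⟨-, -, -, hneg⟩ := h2
    rw [negligible_val_preimage_iff isOpen_univ] at hneg
    obtain ⟨-, hconn⟩ := hneg
    obtain ⟨U₀, hU₀o, hzU₀, e, he⟩ := hZman z hzZ
    obtain ⟨V, Hp, Hn, hVo, hVc, hzV, hVO, hHpo, hHno, hHpc, hHnc, hHpV, hHnV,
      hVZ, hdisj, -⟩ := chart_ball hU₀o e he hzZ hzU₀ hOo hzO
    have hVsub : V ∩ Z ⊆ f ⁻¹' I := by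
      intro w hw
      exact subset_closure ⟨w, ⟨hVO hw.1, hw.2⟩, rfl⟩
    have hVI := hconn V (Set.subset_univ V) hVo hVc
    have hHpI : IsConnected (Hp \ f ⁻¹' I) :=
      diffuse_restrict_conseq hres hneU hHpo hHpc (fun y hy => (hHpV hy).2)
        (fun y _ => Set.mem_univ _)
    have hHnI : IsConnected (Hn \ f ⁻¹' I) :=
      diffuse_restrict_conseq hres hneU hHno hHnc (fun y hy => (hHnV hy).2)
        (fun y _ => Set.mem_univ _)
    have hcover : V \ f ⁻¹' I ⊆ Hp ∪ Hn := by
      intro y hy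
      by_cases hyZ : y ∈ Z
      · exact absurd (hVsub ⟨hy.1, hyZ⟩) hy.2
      · exact hVZ ⟨hy.1, hyZ⟩
    obtain ⟨w, hw⟩ := hVI.isPreconnected Hp Hn hHpo hHno hcover
      (hHpI.nonempty.mono fun y hy => ⟨⟨(hHpV hy.1).1, hy.2⟩, hy.1⟩)
      (hHnI.nonempty.mono fun y hy => ⟨⟨(hHnV hy.1).1, hy.2⟩, hy.1⟩)
    exact (Set.disjoint_left.mp hdisj hw.2.1) hw.2.2

end Main
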